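/- For every maintenance instance on a graph and every feasible LP solution (x, y, f), there exists a feasible preemptive schedule whose total connectivity time is at least the LP objective value Σ_{i=1}^k w_i·f_i. -/

import Mathlib

open MeasureTheory Set

/-- Feasibility of a preemptive maintenance schedule: each edge of the graph is assigned a
measurable set of maintenance times inside its window `[r e, d e]` of measure `p e`. -/
def PreemptFeasible {V : Type*} (G : SimpleGraph V) (r d p : Sym2 V → ℝ)
    (S : Sym2 V → Set ℝ) : Prop :=
  ∀ e ∈ G.edgeSet, MeasurableSet (S e) ∧ S e ⊆ Set.Icc (r e) (d e) ∧
    volume (S e) = ENNReal.ofReal (p e)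

/-- Feasibility of an LP solution `(f, y, x)` for the time grid `tp 0 < tp 1 < ⋯ < tp k`:
`f i` is the connectivity fraction of interval `Iᵢ = [tp (i-1), tp i]`, `y i e` the fractional
availability of edge `e` during `Iᵢ`, and `x i u v` the flow on arc `(u,v)` during `Iᵢ`. -/
def LPFeasible {V : Type*} [Fintype V] [DecidableEq V] (G : SimpleGraph V)
    (sp sm : V) (r d p : Sym2 V → ℝ) {k : ℕ} (tp : Fin (k + 1) → ℝ)
    (f : Fin k → ℝ) (y : Fin k → Sym2 V → ℝ) (x : Fin k → V → V → ℝ) : Prop :=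
  (∀ i, f i ∈ Set.Icc (0 : ℝ) 1) ∧
  (∀ i, ∀ e ∈ G.edgeSet, y i e ∈ Set.Icc (0 : ℝ) 1) ∧
  (∀ i u v, G.Adj u v → x i u v ∈ Set.Icc (0 : ℝ) 1) ∧
  (∀ i u v, ¬ G.Adj u v → x i u v = 0) ∧
  -- flow conservation: net outflow `f i` at `sp`, net inflow `f i` at `sm`, `0` elsewhere
  (∀ i v, (∑ u, x i v u) - (∑ u, x i u v) =
      if v = sp then f i else if v = sm then - f i else 0) ∧
  -- processing constraint: enough maintenance is done inside the window of each edge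
  (∀ e ∈ G.edgeSet,
      p e ≤ ∑ i : Fin k,
        if r e ≤ tp i.castSucc ∧ tp i.succ ≤ d e then
          (1 - y i e) * (tp i.succ - tp i.castSucc) else 0) ∧
  -- capacity constraint
  (∀ i u v, G.Adj u v → x i u v ≤ y i s(u, v))

/-- The LP objective `∑ i wᵢ · fᵢ`. -/
def LPObjective {k : ℕ} (tp : Fin (k + 1) → ℝ) (f : Fin k → ℝ) : ℝ :=
  ∑ i : Fin k, (tp i.succ - tp i.castSucc) * f i

namespace LpSched

variable {V : Type*} [Fintype V] [DecidableEq V] {G : SimpleGraph V}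

open scoped Classical in
lemma count_nodup_ite {α : Type*} [BEq α] [LawfulBEq α] {l : List α} (h : l.Nodup) (a : α) :
    l.count a = if a ∈ l then 1 else 0 := by
  induction l with
  | nil => simp
  | cons b t ih =>
    rw [List.nodup_cons] at h
    rw [List.count_cons, ih h.2]
    by_cases hab : a = b
    · subst hab
      simp [h.1]
    · have hba : ¬ b = a := fun hh => hab hh.symm
      simp [hab, hba, (by simpa using hab : ¬ a == b)]

/-- the list of arcs (as ordered pairs) used by a walk -/
def dartList {u v : V} (p : G.Walk u v) : List (V × V) :=
  p.darts.map fun d => d.toProd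

lemma mem_dartList_adj {u v a b : V} {p : G.Walk a b} (h : (u, v) ∈ dartList p) :
    G.Adj u v := by
  obtain ⟨d, hd, hde⟩ := List.mem_map.1 h
  have := d.adj
  rwa [hde] at this

lemma dartList_nodup {a b : V} {p : G.Walk a b} (hp : p.IsPath) : (dartList p).Nodup := by
  have h1 : p.edges = (dartList p).map (fun q : V × V => s(q.1, q.2)) := by
    simp [SimpleGraph.Walk.edges, dartList, List.map_map, SimpleGraph.Dart.edge, Function.comp]
  have := hp.edges_nodup
  rw [h1] at this
  exact this.of_map _

lemma mem_edges_iff {u v a b : V} (p : G.Walk a b) :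
    s(u, v) ∈ p.edges ↔ (u, v) ∈ dartList p ∨ (v, u) ∈ dartList p := by
  constructor
  · intro h
    obtain ⟨d, hd, hde⟩ := List.mem_map.1 h
    have : d.toProd ∈ dartList p := List.mem_map.2 ⟨d, hd, rfl⟩
    have h2 : s(d.toProd.1, d.toProd.2) = s(u, v) := hde
    rw [Sym2.eq_iff] at h2
    rcases h2 with ⟨h1, h2⟩ | ⟨h1, h2⟩
    · left; rw [← h1, ← h2]; simpa using this
    · right; rw [← h1, ← h2]; simpa using this
  · intro h
    rcases h with h | h
    · obtain ⟨d, hd, hde⟩ := List.mem_map.1 h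
      refine List.mem_map.2 ⟨d, hd, ?_⟩
      show s(d.toProd.1, d.toProd.2) = s(u, v)
      rw [hde]
    · obtain ⟨d, hd, hde⟩ := List.mem_map.1 h
      refine List.mem_map.2 ⟨d, hd, ?_⟩
      show s(d.toProd.1, d.toProd.2) = s(u, v)
      rw [hde]
      exact Sym2.eq_swap

/-- net flow of the arc-counting function of a walk -/
lemma dartList_net {a b : V} (p : G.Walk a b) (v : V) :
    ((∑ u, ((dartList p).count (v, u) : ℝ)) - ∑ u, ((dartList p).count (u, v) : ℝ))
      = (if v = a then 1 else 0) - (if v = b then 1 else 0) := by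
  induction p with
  | nil => simp [dartList]
  | @cons a c b h q ih =>
    have hd : dartList (SimpleGraph.Walk.cons h q) = (a, c) :: dartList q := by
      simp [dartList, SimpleGraph.Walk.darts_cons]
    simp only [hd, List.count_cons, beq_iff_eq]
    push_cast
    rw [Finset.sum_add_distrib, Finset.sum_add_distrib]
    have e1 : (∑ u, if ((a, c) : V × V) = (v, u) then (1 : ℝ) else 0)
        = if v = a then 1 else 0 := by
      by_cases hv : v = a
      · subst hv; simp [Prod.ext_iff]
      · have hne : ∀ u : V, ¬(((a, c) : V × V) = (v, u)) := fun u hc =>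
          hv (congrArg Prod.fst hc).symm
        simp [hne, hv]
    have e2 : (∑ u, if ((a, c) : V × V) = (u, v) then (1 : ℝ) else 0)
        = if v = c then 1 else 0 := by
      by_cases hv : v = c
      · subst hv; simp [Prod.ext_iff]
      · have hne : ∀ u : V, ¬(((a, c) : V × V) = (u, v)) := fun u hc =>
          hv (congrArg Prod.snd hc).symm
        simp [hne, hv]
    rw [e1, e2]
    ring_nf
    ring_nf at ih
    linarith [ih]


def netFlow (x : V → V → ℝ) (v : V) : ℝ := (∑ u, x v u) - ∑ u, x u v

lemma sum_netFlow (x : V → V → ℝ) : ∑ v, netFlow x v = 0 := by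
  simp only [netFlow, Finset.sum_sub_distrib]
  rw [Finset.sum_comm]
  ring

open scoped Classical in
lemma reach_of_pos_flow (sp sm : V) (x : V → V → ℝ) (f : ℝ)
    (hx0 : ∀ u v, 0 ≤ x u v)
    (hcons : ∀ v, netFlow x v = if v = sp then f else if v = sm then -f else 0)
    (hf : 0 < f) :
    Relation.ReflTransGen (fun u v => 0 < x u v) sp sm := by
  by_contra hns
  set Rp : V → Prop := Relation.ReflTransGen (fun u v => 0 < x u v) sp with hRp
  set R : Finset V := Finset.univ.filter Rp with hR
  have hsp : sp ∈ R := by simp [hR, hRp, Relation.ReflTransGen.refl]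
  have hsm : sm ∉ R := by simp [hR]; exact hns
  have hstep : ∀ v ∈ R, ∀ u, u ∉ R → x v u = 0 := by
    intro v hv u hu
    refine le_antisymm ?_ (hx0 v u)
    by_contra hlt
    push_neg at hlt
    have : Rp u := Relation.ReflTransGen.tail (by simpa [hR, hRp] using hv) hlt
    exact hu (by simp [hR, this])
  have hsum1 : ∑ v ∈ R, netFlow x v = f := by
    rw [Finset.sum_eq_single_of_mem sp hsp]
    · simp [hcons sp]
    · intro v hv hne
      rw [hcons v, if_neg hne, if_neg]
      rintro rfl; exact hsm hv
  have h1 : ∀ v ∈ R, ∑ u, x v u = ∑ u ∈ R, x v u := by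
    intro v hv
    rw [← Finset.sum_add_sum_compl R (fun u => x v u)]
    have : ∑ u ∈ Rᶜ, x v u = 0 :=
      Finset.sum_eq_zero (fun u hu => hstep v hv u (Finset.mem_compl.1 hu))
    rw [this, add_zero]
  have h2 : ∀ v ∈ R, ∑ u ∈ R, x u v ≤ ∑ u, x u v := by
    intro v _
    exact Finset.sum_le_sum_of_subset_of_nonneg (Finset.subset_univ R)
      (fun u _ _ => hx0 u v)
  have hle : ∑ v ∈ R, netFlow x v ≤ 0 := by
    have : ∑ v ∈ R, netFlow x v ≤ ∑ v ∈ R, (∑ u ∈ R, x v u - ∑ u ∈ R, x u v) := by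
      refine Finset.sum_le_sum (fun v hv => ?_)
      unfold netFlow
      rw [h1 v hv]
      have := h2 v hv
      linarith
    rw [Finset.sum_sub_distrib, Finset.sum_comm, sub_self] at this
    exact this
  rw [hsum1] at hle
  linarith

lemma exists_walk_of_reach {sp sm : V} {x : V → V → ℝ}
    (hadj : ∀ u v, ¬ G.Adj u v → x u v = 0)
    (h : Relation.ReflTransGen (fun u v => 0 < x u v) sp sm) :
    ∃ p : G.Walk sp sm, ∀ q ∈ dartList p, 0 < x q.1 q.2 := by
  induction h with
  | refl => exact ⟨SimpleGraph.Walk.nil, by simp [dartList]⟩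
  | @tail b c _ hbc ih =>
    obtain ⟨p, hp⟩ := ih
    have hadjbc : G.Adj b c := by
      by_contra hn
      rw [hadj b c hn] at hbc
      exact lt_irrefl 0 hbc
    refine ⟨p.concat hadjbc, ?_⟩
    intro q hq
    rw [dartList, SimpleGraph.Walk.darts_concat] at hq
    rcases (by simpa using hq : (∃ a ∈ p.darts, a.toProd = q) ∨ q = (b, c)) with ⟨d, hd, hdq⟩ | hq
    · exact hp q (by rw [← hdq]; exact List.mem_map.2 ⟨d, hd, rfl⟩)
    · subst hq
      exact hbc


lemma exists_path_pos {sp sm : V} {x : V → V → ℝ} {f : ℝ}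
    (hx0 : ∀ u v, 0 ≤ x u v)
    (hadj : ∀ u v, ¬ G.Adj u v → x u v = 0)
    (hcons : ∀ v, netFlow x v = if v = sp then f else if v = sm then -f else 0)
    (hf : 0 < f) :
    sp ≠ sm ∧ ∃ p : G.Walk sp sm, p.IsPath ∧ dartList p ≠ [] ∧
      ∀ q ∈ dartList p, 0 < x q.1 q.2 := by
  have hne : sp ≠ sm := by
    rintro rfl
    have h0 := sum_netFlow x
    have h1 : ∑ v, netFlow x v = f := by
      rw [Finset.sum_eq_single_of_mem sp (Finset.mem_univ sp)]
      · simp [hcons sp]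
      · intro v _ hvne
        rw [hcons v, if_neg hvne, if_neg hvne]
    rw [h0] at h1
    linarith
  obtain ⟨w, hw⟩ := exists_walk_of_reach (G := G) hadj
    (reach_of_pos_flow sp sm x f hx0 hcons hf)
  refine ⟨hne, w.bypass, w.bypass_isPath, ?_, ?_⟩
  · cases hwb : w.bypass with
    | nil => exact absurd rfl hne
    | cons h q => simp [dartList]
  · intro q hq
    refine hw q ?_
    exact List.map_subset _ w.darts_bypass_subset hq

open scoped Classical in
lemma flow_decomp (G : SimpleGraph V) (sp sm : V) :
    ∀ (N : ℕ) (x : V → V → ℝ) (f : ℝ),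
    ((Finset.univ : Finset (V × V)).filter (fun q => 0 < x q.1 q.2)).card ≤ N →
    0 ≤ f →
    (∀ u v, 0 ≤ x u v) →
    (∀ u v, ¬ G.Adj u v → x u v = 0) →
    (∀ v, netFlow x v = if v = sp then f else if v = sm then -f else 0) →
    ∃ (m : ℕ) (P : Fin m → G.Walk sp sm) (g : Fin m → ℝ),
      (∀ j, 0 ≤ g j) ∧ (∀ j, (P j).IsPath) ∧ (∑ j, g j = f) ∧
      (∀ u v : V, (∑ j, if s(u, v) ∈ (P j).edges then g j else 0) ≤ x u v + x v u) := by
  intro N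
  induction N with
  | zero =>
    intro x f hcard hf0 hx0 hadj hcons
    rcases hf0.eq_or_lt with hf | hf
    · exact ⟨0, Fin.elim0, Fin.elim0, fun j => j.elim0, fun j => j.elim0,
        by simp [← hf], fun u v => by simpa using add_nonneg (hx0 u v) (hx0 v u)⟩
    · obtain ⟨_, p, _, hLne, hpos⟩ := exists_path_pos hx0 hadj hcons hf
      obtain ⟨q0, hq0⟩ := List.exists_mem_of_ne_nil _ hLne
      have : q0 ∈ (Finset.univ : Finset (V × V)).filter (fun q => 0 < x q.1 q.2) :=
        Finset.mem_filter.2 ⟨Finset.mem_univ _, hpos q0 hq0⟩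
      have := Finset.card_pos.2 ⟨q0, this⟩
      omega
  | succ n ih =>
    intro x f hcard hf0 hx0 hadj hcons
    rcases hf0.eq_or_lt with hf | hf
    · exact ⟨0, Fin.elim0, Fin.elim0, fun j => j.elim0, fun j => j.elim0,
        by simp [← hf], fun u v => by simpa using add_nonneg (hx0 u v) (hx0 v u)⟩
    · obtain ⟨hnesp, p, hpath, hLne, hpos⟩ := exists_path_pos hx0 hadj hcons hf
      set L := dartList p with hLdef
      have hsne : L.toFinset.Nonempty := by
        rw [List.toFinset_nonempty_iff]; exact hLne
      set δ := L.toFinset.inf' hsne (fun q => x q.1 q.2) with hδdef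
      have hδpos : 0 < δ := by
        rw [hδdef, Finset.lt_inf'_iff]
        exact fun q hq => hpos q (List.mem_toFinset.1 hq)
      have hδle : ∀ q ∈ L, δ ≤ x q.1 q.2 := fun q hq =>
        Finset.inf'_le _ (List.mem_toFinset.2 hq)
      by_cases hcase : f ≤ δ
      · refine ⟨1, fun _ => p, fun _ => f, fun _ => hf.le, fun _ => hpath,
          by simp, fun u v => ?_⟩
        rw [Fin.sum_univ_one]
        by_cases he : s(u, v) ∈ p.edges
        · rw [if_pos he]
          rcases (mem_edges_iff p).1 he with h | h
          · have := hδle (u, v) h; have := hx0 v u; simp at this ⊢; linarith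
          · have := hδle (v, u) h; have := hx0 u v; simp at this ⊢; linarith
        · rw [if_neg he]
          exact add_nonneg (hx0 u v) (hx0 v u)
      · push_neg at hcase
        set x₂ : V → V → ℝ := fun a b => x a b - δ * ((L.count (a, b) : ℝ)) with hx2def
        have hnodup : L.Nodup := dartList_nodup hpath
        have hcnt : ∀ q : V × V, ((L.count q : ℝ)) = if q ∈ L then 1 else 0 := by
          intro q
          rw [count_nodup_ite hnodup q]
          by_cases h : q ∈ L
          · rw [if_pos h, if_pos h, Nat.cast_one]
          · rw [if_neg h, if_neg h, Nat.cast_zero]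
        have hx20 : ∀ u v, 0 ≤ x₂ u v := by
          intro u v
          rw [hx2def]
          simp only
          rw [hcnt]
          by_cases h : ((u, v) : V × V) ∈ L
          · rw [if_pos h]; have := hδle (u, v) h; simp at this; linarith
          · rw [if_neg h]; have := hx0 u v; linarith
        have hx2adj : ∀ u v, ¬ G.Adj u v → x₂ u v = 0 := by
          intro u v h
          have hnm : ((u, v) : V × V) ∉ L := fun hm => h (mem_dartList_adj hm)
          rw [hx2def]
          simp only
          rw [hcnt, if_neg hnm, hadj u v h]
          ring
        have hx2cons : ∀ v, netFlow x₂ v =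
            if v = sp then f - δ else if v = sm then -(f - δ) else 0 := by
          intro v
          have expand : netFlow x₂ v = netFlow x v
              - δ * ((∑ u, ((L.count ((v, u) : V × V)) : ℝ))
                - ∑ u, ((L.count ((u, v) : V × V)) : ℝ)) := by
            simp only [netFlow, hx2def, Finset.sum_sub_distrib, Finset.mul_sum]
            ring_nf
            rw [Finset.mul_sum, Finset.mul_sum]
            ring
          rw [expand, dartList_net p v, hcons v]
          by_cases h1 : v = sp
          · have h2 : v ≠ sm := by rw [h1]; exact hnesp
            simp only [if_pos h1, if_neg h2]; ring
          · by_cases h2 : v = sm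
            · simp only [if_neg h1, if_pos h2]; ring
            · simp only [if_neg h1, if_neg h2]; ring
        have hq0 := Finset.exists_mem_eq_inf' hsne (fun q => x q.1 q.2)
        obtain ⟨q0, hq0s, hq0eq⟩ := hq0
        have hq0L : q0 ∈ L := List.mem_toFinset.1 hq0s
        have hcard2 : ((Finset.univ : Finset (V × V)).filter
            (fun q => 0 < x₂ q.1 q.2)).card ≤ n := by
          have hsub : (Finset.univ : Finset (V × V)).filter (fun q => 0 < x₂ q.1 q.2) ⊆
              (Finset.univ : Finset (V × V)).filter (fun q => 0 < x q.1 q.2) := by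
            intro q hq
            rw [Finset.mem_filter] at hq ⊢
            refine ⟨hq.1, lt_of_lt_of_le hq.2 ?_⟩
            rw [hx2def]
            simp only
            have : (0 : ℝ) ≤ δ * ((L.count (q.1, q.2) : ℝ)) := by positivity
            linarith
          have hq0f : q0 ∈ (Finset.univ : Finset (V × V)).filter
              (fun q => 0 < x q.1 q.2) :=
            Finset.mem_filter.2 ⟨Finset.mem_univ _, hpos q0 hq0L⟩
          have hq0nf : q0 ∉ (Finset.univ : Finset (V × V)).filter
              (fun q => 0 < x₂ q.1 q.2) := by
            rw [Finset.mem_filter]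
            rintro ⟨-, hq⟩
            rw [hx2def] at hq
            simp only at hq
            rw [hcnt] at hq
            rw [if_pos (by simpa using hq0L)] at hq
            rw [← hq0eq] at hq
            linarith [hq, show (L.toFinset.inf' hsne fun q => x q.1 q.2) = δ from hδdef.symm]
          have hlt := Finset.card_lt_card (Finset.ssubset_iff_of_subset hsub |>.2
            ⟨q0, hq0f, hq0nf⟩)
          omega
        obtain ⟨m, P, g, hg0, hgP, hgsum, hgbd⟩ :=
          ih x₂ (f - δ) hcard2 (by linarith) hx20 hx2adj hx2cons
        refine ⟨m + 1, Fin.cons p P, Fin.cons δ g, ?_, ?_, ?_, ?_⟩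
        · intro j
          induction j using Fin.cases with
          | zero => simpa using hδpos.le
          | succ jj => simpa using hg0 jj
        · intro j
          induction j using Fin.cases with
          | zero => simpa using hpath
          | succ jj => simpa using hgP jj
        · rw [Fin.sum_univ_succ]
          simp only [Fin.cons_zero, Fin.cons_succ]
          rw [hgsum]; ring
        · intro u v
          have hb := hgbd u v
          have hkey : (if s(u, v) ∈ p.edges then δ else 0) ≤
              δ * (((L.count ((u, v) : V × V)) : ℝ) + ((L.count ((v, u) : V × V)) : ℝ)) := by
            by_cases he : s(u, v) ∈ p.edges
            · rw [if_pos he]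
              have h1 : (1 : ℝ) ≤ ((L.count ((u, v) : V × V)) : ℝ)
                  + ((L.count ((v, u) : V × V)) : ℝ) := by
                rw [hcnt, hcnt]
                rcases (mem_edges_iff p).1 he with h | h
                · rw [if_pos h]; split_ifs <;> norm_num
                · rw [if_pos h]; split_ifs <;> norm_num
              nlinarith
            · rw [if_neg he]; positivity
          have hx2sum : x₂ u v + x₂ v u = x u v + x v u
              - δ * (((L.count ((u, v) : V × V)) : ℝ) + ((L.count ((v, u) : V × V)) : ℝ)) := by
            rw [hx2def]; simp only; ring
          rw [Fin.sum_univ_succ]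
          simp only [Fin.cons_zero, Fin.cons_succ]
          linarith

open scoped Classical in
lemma flow_paths (G : SimpleGraph V) (sp sm : V) (y : Sym2 V → ℝ) (x : V → V → ℝ) (f : ℝ)
    (hf0 : 0 ≤ f)
    (hx00 : ∀ u v, G.Adj u v → 0 ≤ x u v)
    (hxadj : ∀ u v, ¬ G.Adj u v → x u v = 0)
    (hcons : ∀ v, (∑ u, x v u) - (∑ u, x u v) =
      if v = sp then f else if v = sm then -f else 0)
    (hcap : ∀ u v, G.Adj u v → x u v ≤ y s(u, v)) :
    ∃ (m : ℕ) (P : Fin m → G.Walk sp sm) (g : Fin m → ℝ),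
      (∀ j, 0 ≤ g j) ∧ (∑ j, g j = f) ∧
      (∀ e ∈ G.edgeSet, (∑ j, if e ∈ (P j).edges then g j else 0) ≤ y e) := by
  have hx0 : ∀ u v, 0 ≤ x u v := by
    intro u v
    by_cases h : G.Adj u v
    · exact hx00 u v h
    · rw [hxadj u v h]
  set x' : V → V → ℝ := fun u v => max (x u v - x v u) 0 with hx'def
  have hx'0 : ∀ u v, 0 ≤ x' u v := fun u v => le_max_right _ _
  have hx'adj : ∀ u v, ¬ G.Adj u v → x' u v = 0 := by
    intro u v h
    have h' : ¬ G.Adj v u := fun hh => h hh.symm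
    rw [hx'def]
    simp only
    rw [hxadj u v h, hxadj v u h']
    simp
  have hx'cons : ∀ v, netFlow x' v = if v = sp then f else if v = sm then -f else 0 := by
    intro v
    have hpt : ∀ u, x' v u - x' u v = x v u - x u v := by
      intro u
      rw [hx'def]
      simp only
      rcases le_total (x v u) (x u v) with h | h
      · rw [max_eq_right (by linarith), max_eq_left (by linarith)]; ring
      · rw [max_eq_left (by linarith), max_eq_right (by linarith)]; ring
    have : netFlow x' v = netFlow x v := by
      unfold netFlow
      rw [← Finset.sum_sub_distrib, ← Finset.sum_sub_distrib]
      exact Finset.sum_congr rfl (fun u _ => hpt u)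
    rw [this]
    unfold netFlow
    exact hcons v
  obtain ⟨m, P, g, hg0, _, hgsum, hgbd⟩ := flow_decomp G sp sm
    ((Finset.univ : Finset (V × V)).filter (fun q => 0 < x' q.1 q.2)).card
    x' f le_rfl hf0 hx'0 hx'adj hx'cons
  refine ⟨m, P, g, hg0, hgsum, ?_⟩
  intro e he
  induction e using Sym2.inductionOn with
  | hf u v =>
    have hadj : G.Adj u v := he
    have h1 := hcap u v hadj
    have h2 := hcap v u hadj.symm
    rw [Sym2.eq_swap] at h2
    have h3 := hx0 u v
    have h4 := hx0 v u
    have hbd := hgbd u v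
    have hx'sum : x' u v + x' v u ≤ y s(u, v) := by
      rw [hx'def]
      simp only
      rcases le_total (x u v) (x v u) with h | h
      · rw [max_eq_right (by linarith), max_eq_left (by linarith)]; linarith
      · rw [max_eq_left (by linarith), max_eq_right (by linarith)]; linarith
    linarith

lemma exists_subset_volume_eq {s : Set ℝ} (hs : MeasurableSet s) {a b c : ℝ}
    (hsub : s ⊆ Set.Ico a b) (hc0 : 0 ≤ c) (hc : ENNReal.ofReal c ≤ volume s) :
    ∃ T : Set ℝ, T ⊆ s ∧ MeasurableSet T ∧ volume T = ENNReal.ofReal c := by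
  by_cases hab : a ≤ b
  · have hsfin : volume s ≠ ⊤ := by
      refine ne_top_of_le_ne_top ?_ (measure_mono hsub)
      rw [Real.volume_Ico]
      exact ENNReal.ofReal_ne_top
    have hfin' : ∀ τ : ℝ, volume (s ∩ Set.Iio τ) ≠ ⊤ :=
      fun τ => ne_top_of_le_ne_top hsfin (measure_mono Set.inter_subset_left)
    set g : ℝ → ℝ := fun τ => (volume (s ∩ Set.Iio τ)).toReal with hgdef
    have hmono : ∀ τ τ' : ℝ, τ ≤ τ' → g τ ≤ g τ' := by
      intro τ τ' h
      exact ENNReal.toReal_le_toReal (hfin' τ) (hfin' τ') |>.mpr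
        (measure_mono (Set.inter_subset_inter_right _ (Set.Iio_subset_Iio h)))
    have hlip : ∀ τ τ' : ℝ, τ ≤ τ' → g τ' ≤ g τ + (τ' - τ) := by
      intro τ τ' h
      have hss : s ∩ Set.Iio τ' ⊆ (s ∩ Set.Iio τ) ∪ Set.Ico τ τ' := by
        rintro z ⟨hz1, hz2⟩
        by_cases hz : z < τ
        · exact Or.inl ⟨hz1, hz⟩
        · exact Or.inr ⟨le_of_not_gt hz, hz2⟩
      have hv : volume (s ∩ Set.Iio τ') ≤ volume (s ∩ Set.Iio τ) + ENNReal.ofReal (τ' - τ) := by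
        refine le_trans (measure_mono hss) ?_
        refine le_trans (measure_union_le _ _) ?_
        rw [Real.volume_Ico]
      have := ENNReal.toReal_le_toReal (hfin' τ')
        (by
          refine ENNReal.add_ne_top.2 ⟨hfin' τ, ENNReal.ofReal_ne_top⟩) |>.mpr hv
      rw [ENNReal.toReal_add (hfin' τ) ENNReal.ofReal_ne_top,
        ENNReal.toReal_ofReal (by linarith)] at this
      exact this
    have hcont : Continuous g := by
      refine LipschitzWith.continuous (K := 1) ?_
      rw [lipschitzWith_iff_dist_le_mul]
      intro τ τ'
      rw [Real.dist_eq, Real.dist_eq]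
      push_cast
      rw [one_mul]
      have key : ∀ σ σ' : ℝ, σ ≤ σ' → |g σ' - g σ| ≤ σ' - σ := by
        intro σ σ' h
        rw [abs_le]
        constructor
        · have := hmono σ σ' h; linarith
        · have := hlip σ σ' h; linarith
      rcases le_total τ τ' with h | h
      · have h1 : |τ - τ'| = τ' - τ := by rw [abs_sub_comm]; exact abs_of_nonneg (by linarith)
        rw [abs_sub_comm (g τ) (g τ'), h1]
        exact key τ τ' h
      · have h1 : |τ - τ'| = τ - τ' := abs_of_nonneg (by linarith)
        rw [h1]
        exact key τ' τ h
    have hga : g a = 0 := by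
      have : s ∩ Set.Iio a = ∅ := by
        rw [Set.eq_empty_iff_forall_notMem]
        rintro z ⟨hz1, hz2⟩
        exact absurd (hsub hz1).1 (not_le.2 hz2)
      rw [hgdef]
      simp [this]
    have hgb : c ≤ g b := by
      have hsb : s ∩ Set.Iio b = s := by
        rw [Set.inter_eq_left]
        exact fun z hz => (hsub hz).2
      have : ENNReal.ofReal c ≤ volume (s ∩ Set.Iio b) := by rw [hsb]; exact hc
      have h2 := ENNReal.toReal_le_toReal ENNReal.ofReal_ne_top (hfin' b) |>.mpr this
      rwa [ENNReal.toReal_ofReal hc0] at h2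
    have hiv := intermediate_value_Icc hab hcont.continuousOn
    have : c ∈ Set.Icc (g a) (g b) := ⟨by rw [hga]; exact hc0, hgb⟩
    obtain ⟨τ, _, hτ⟩ := hiv this
    refine ⟨s ∩ Set.Iio τ, Set.inter_subset_left, hs.inter measurableSet_Iio, ?_⟩
    rw [← ENNReal.ofReal_toReal (hfin' τ)]
    rw [hgdef] at hτ
    simp only at hτ
    rw [hτ]
  · have hse : s = ∅ := by
      rw [Set.eq_empty_iff_forall_notMem]
      intro z hz
      have := hsub hz
      exact hab (le_of_lt (lt_of_le_of_lt this.1 this.2))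
    refine ⟨∅, by simp, MeasurableSet.empty, ?_⟩
    rw [hse] at hc
    simp at hc ⊢
    have : c = 0 := le_antisymm hc hc0
    simp [this]
end LpSched

/-- **Lemma 3 (LP solutions can be turned into schedules).**
For every maintenance instance and every feasible LP solution `(f, y, x)`, there is a feasible
preemptive schedule whose total connectivity time is at least the LP objective value. -/

theorem lp_to_schedule {V : Type*} [Fintype V] [DecidableEq V]
    (G : SimpleGraph V) (sp sm : V) (r d p : Sym2 V → ℝ)
    (hr : ∀ e ∈ G.edgeSet, 0 ≤ r e)
    (hp : ∀ e ∈ G.edgeSet, 0 ≤ p e)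
    (hrd : ∀ e ∈ G.edgeSet, r e + p e ≤ d e)
    {k : ℕ} (tp : Fin (k + 1) → ℝ) (htp : StrictMono tp)
    (hrange : Set.range tp = insert 0 {τ : ℝ | ∃ e ∈ G.edgeSet, r e = τ ∨ d e = τ})
    (f : Fin k → ℝ) (y : Fin k → Sym2 V → ℝ) (x : Fin k → V → V → ℝ)
    (hLP : LPFeasible G sp sm r d p tp f y x) :
    ∃ S : Sym2 V → Set ℝ, PreemptFeasible G r d p S ∧
      ENNReal.ofReal (LPObjective tp f) ≤
        volume {t ∈ Set.Icc 0 (tp (Fin.last k)) |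
          (G.deleteEdges {e | t ∈ S e}).Reachable sp sm} := by
  classical
  obtain ⟨hf01, hy01, hx01, hxadj, hcons, hproc, hcap⟩ := hLP
  have hab : ∀ i : Fin k, tp i.castSucc ≤ tp i.succ :=
    fun i => (htp (Fin.castSucc_lt_succ : i.castSucc < i.succ)).le
  have hw0 : ∀ i : Fin k, 0 ≤ tp i.succ - tp i.castSucc := fun i => by linarith [hab i]
  have htp0 : tp 0 = 0 := by
    have h0mem : (0 : ℝ) ∈ Set.range tp := by rw [hrange]; exact Set.mem_insert _ _
    obtain ⟨j0, hj0⟩ := h0mem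
    have h1 : tp 0 ≤ 0 := by rw [← hj0]; exact htp.monotone (Fin.zero_le j0)
    have h2 : (0 : ℝ) ≤ tp 0 := by
      have hmem : tp 0 ∈ Set.range tp := Set.mem_range_self 0
      rw [hrange, Set.mem_insert_iff] at hmem
      rcases hmem with h | h
      · rw [h]
      · obtain ⟨e, he, hre | hde⟩ := h
        · rw [← hre]; exact hr e he
        · rw [← hde]
          have := hrd e he; have := hr e he; have := hp e he
          linarith
    linarith
  -- interval bounds inside [0, tp last]
  have hbounds : ∀ i : Fin k, 0 ≤ tp i.castSucc ∧ tp i.succ ≤ tp (Fin.last k) := by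
    intro i
    constructor
    · rw [← htp0]; exact htp.monotone (Fin.zero_le _)
    · exact htp.monotone (Fin.le_last _)
  -- disjointness of the time intervals
  have hIcoDisj : ∀ i i' : Fin k, i ≠ i' →
      Disjoint (Set.Ico (tp i.castSucc) (tp i.succ)) (Set.Ico (tp i'.castSucc) (tp i'.succ)) := by
    have key : ∀ i i' : Fin k, i < i' → tp i.succ ≤ tp i'.castSucc := by
      intro i i' h
      apply htp.monotone
      rw [Fin.le_def]
      simp only [Fin.val_succ, Fin.coe_castSucc]
      exact Nat.succ_le_of_lt (Fin.lt_iff_val_lt_val.1 h)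
    intro i i' hne
    rw [Set.Ico_disjoint_Ico]
    rcases lt_or_gt_of_ne hne with h | h
    · exact le_trans (min_le_left _ _) (le_trans (key i i' h) (le_max_right _ _))
    · exact le_trans (min_le_right _ _) (le_trans (key i' i h) (le_max_left _ _))
  -- flow decompositions for each interval
  have hdec : ∀ i : Fin k, ∃ (mm : ℕ) (P : Fin mm → G.Walk sp sm) (g : Fin mm → ℝ),
      (∀ j, 0 ≤ g j) ∧ (∑ j, g j = f i) ∧
      (∀ e ∈ G.edgeSet, (∑ j, if e ∈ (P j).edges then g j else 0) ≤ y i e) :=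
    fun i => LpSched.flow_paths G sp sm (y i) (x i) (f i) (hf01 i).1
      (fun u v h => (hx01 i u v h).1) (hxadj i) (hcons i) (hcap i)
  choose m P g hg0 hgsum hgbd using hdec
  -- cumulative sums of the decomposition weights
  set C : (i : Fin k) → ℕ → ℝ :=
    fun i n => ∑ j ∈ Finset.range n, (if h : j < m i then g i ⟨j, h⟩ else 0) with hCdef
  have hterm0 : ∀ (i : Fin k) (j : ℕ), 0 ≤ (if h : j < m i then g i ⟨j, h⟩ else 0) := by
    intro i j
    split_ifs with h
    · exact hg0 i _
    · exact le_refl 0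
  have hC0 : ∀ i n, 0 ≤ C i n := fun i n =>
    Finset.sum_nonneg (fun j _ => hterm0 i j)
  have hCmono : ∀ (i : Fin k) (n n' : ℕ), n ≤ n' → C i n ≤ C i n' := by
    intro i n n' h
    exact Finset.sum_le_sum_of_subset_of_nonneg (Finset.range_subset_range.2 h)
      (fun j _ _ => hterm0 i j)
  have hCeq : ∀ (i : Fin k) (N : ℕ), m i ≤ N → C i N = f i := by
    intro i N hN
    have h1 : C i N = C i (m i) := by
      rw [hCdef]
      exact (Finset.sum_subset (Finset.range_subset_range.2 hN)
        (fun j _ hj => dif_neg (by simpa using hj))).symm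
    rw [h1, ← hgsum i, hCdef]
    simp only
    rw [← Fin.sum_univ_eq_sum_range (fun j => if h : j < m i then g i ⟨j, h⟩ else 0) (m i)]
    exact Finset.sum_congr rfl (fun j _ => by rw [dif_pos j.isLt])
  have hCf : ∀ (i : Fin k) (n : ℕ), C i n ≤ f i := by
    intro i n
    calc C i n ≤ C i (max n (m i)) := hCmono i _ _ (le_max_left _ _)
    _ = f i := hCeq i _ (le_max_right _ _)
  have hCstep : ∀ (i : Fin k) (j : Fin (m i)), C i ((j : ℕ) + 1) = C i (j : ℕ) + g i j := by
    intro i j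
    rw [hCdef]
    simp only [Finset.sum_range_succ]
    rw [dif_pos j.isLt]
  -- connectivity pieces
  set piece : (i : Fin k) → Fin (m i) → Set ℝ := fun i j =>
    Set.Ico (tp i.castSucc + (tp i.succ - tp i.castSucc) * C i (j : ℕ))
            (tp i.castSucc + (tp i.succ - tp i.castSucc) * C i ((j : ℕ) + 1)) with hpiecedef
  have hpsub : ∀ (i : Fin k) (j : Fin (m i)),
      piece i j ⊆ Set.Ico (tp i.castSucc) (tp i.succ) := by
    intro i j
    rw [hpiecedef]
    apply Set.Ico_subset_Ico
    · nlinarith [mul_nonneg (hw0 i) (hC0 i (j : ℕ))]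
    · have h1 : C i ((j : ℕ) + 1) ≤ 1 := le_trans (hCf i _) (hf01 i).2
      nlinarith [hw0 i]
  have hpvol : ∀ (i : Fin k) (j : Fin (m i)),
      volume (piece i j) = ENNReal.ofReal ((tp i.succ - tp i.castSucc) * g i j) := by
    intro i j
    rw [hpiecedef]
    simp only
    rw [Real.volume_Ico]
    congr 1
    rw [hCstep i j]
    ring
  have hpdisj : ∀ i : Fin k, Pairwise (Function.onFun Disjoint (piece i)) := by
    intro i
    have key : ∀ j j' : Fin (m i), j < j' →
        tp i.castSucc + (tp i.succ - tp i.castSucc) * C i ((j : ℕ) + 1) ≤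
        tp i.castSucc + (tp i.succ - tp i.castSucc) * C i ((j' : ℕ)) := by
      intro j j' h
      have h1 : C i ((j : ℕ) + 1) ≤ C i (j' : ℕ) :=
        hCmono i _ _ (Nat.succ_le_of_lt (Fin.lt_iff_val_lt_val.1 h))
      nlinarith [hw0 i]
    intro j j' hne
    rw [Function.onFun, hpiecedef]
    simp only
    rw [Set.Ico_disjoint_Ico]
    rcases lt_or_gt_of_ne hne with h | h
    · exact le_trans (min_le_left _ _) (le_trans (key j j' h) (le_max_right _ _))
    · exact le_trans (min_le_right _ _) (le_trans (key j' j h) (le_max_left _ _))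
  -- availability sets
  set Avail : Sym2 V → Fin k → Set ℝ := fun e i =>
    ⋃ (j : Fin (m i)) (_ : e ∈ (P i j).edges), piece i j with hAdef
  have hpmeas : ∀ (i : Fin k) (j : Fin (m i)), MeasurableSet (piece i j) := by
    intro i j
    rw [hpiecedef]
    exact measurableSet_Ico
  have hAmeas : ∀ e i, MeasurableSet (Avail e i) := by
    intro e i
    rw [hAdef]
    exact MeasurableSet.iUnion fun j => MeasurableSet.iUnion fun _ => hpmeas i j
  have hAsub : ∀ e i, Avail e i ⊆ Set.Ico (tp i.castSucc) (tp i.succ) := by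
    intro e i
    rw [hAdef]
    exact Set.iUnion₂_subset fun j _ => hpsub i j
  have hAvol : ∀ (i : Fin k), ∀ e ∈ G.edgeSet,
      volume (Avail e i) ≤ ENNReal.ofReal ((tp i.succ - tp i.castSucc) * y i e) := by
    intro i e he
    have h1 : volume (Avail e i) ≤
        ∑ j : Fin (m i), ENNReal.ofReal
          (if e ∈ (P i j).edges then (tp i.succ - tp i.castSucc) * g i j else 0) := by
      rw [hAdef]
      refine le_trans (measure_iUnion_le _) ?_
      rw [tsum_fintype]
      refine Finset.sum_le_sum fun j _ => ?_
      rw [Set.iUnion_eq_if]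
      split_ifs with h
      · rw [hpvol i j]
      · simp
    refine le_trans h1 ?_
    rw [← ENNReal.ofReal_sum_of_nonneg (fun j _ => by
      split_ifs with h
      · exact mul_nonneg (hw0 i) (hg0 i j)
      · exact le_refl 0)]
    apply ENNReal.ofReal_le_ofReal
    have h2 : (∑ j : Fin (m i), if e ∈ (P i j).edges then
        (tp i.succ - tp i.castSucc) * g i j else 0)
        = (tp i.succ - tp i.castSucc) * ∑ j : Fin (m i), if e ∈ (P i j).edges then g i j else 0 := by
      rw [Finset.mul_sum]
      exact Finset.sum_congr rfl fun j _ => by rw [mul_ite, mul_zero]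
    rw [h2]
    exact mul_le_mul_of_nonneg_left (hgbd i e he) (hw0 i)
  -- maintenance amounts
  set cap : Sym2 V → Fin k → ℝ := fun e i =>
    if r e ≤ tp i.castSucc ∧ tp i.succ ≤ d e then
      (1 - y i e) * (tp i.succ - tp i.castSucc) else 0 with hcapdef
  have hcap0 : ∀ e ∈ G.edgeSet, ∀ i, 0 ≤ cap e i := by
    intro e he i
    rw [hcapdef]
    simp only
    split_ifs with h
    · have hy := hy01 i e he
      nlinarith [hy.2, hw0 i]
    · exact le_refl 0
  set capN : Sym2 V → ℕ → ℝ := fun e n => if h : n < k then cap e ⟨n, h⟩ else 0 with hcapNdef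
  have hcapN0 : ∀ e ∈ G.edgeSet, ∀ n, 0 ≤ capN e n := by
    intro e he n
    rw [hcapNdef]
    simp only
    split_ifs with h
    · exact hcap0 e he _
    · exact le_refl 0
  set Cum : Sym2 V → ℕ → ℝ := fun e n => min (p e) (∑ j ∈ Finset.range n, capN e j) with hCumdef
  set mAmt : Sym2 V → Fin k → ℝ := fun e i => Cum e ((i : ℕ) + 1) - Cum e (i : ℕ) with hmAmtdef
  have hCumMono : ∀ e ∈ G.edgeSet, ∀ n n' : ℕ, n ≤ n' → Cum e n ≤ Cum e n' := by
    intro e he n n' h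
    rw [hCumdef]
    exact min_le_min (le_refl _) (Finset.sum_le_sum_of_subset_of_nonneg
      (Finset.range_subset_range.2 h) (fun j _ _ => hcapN0 e he j))
  have hm0 : ∀ e ∈ G.edgeSet, ∀ i, 0 ≤ mAmt e i := by
    intro e he i
    rw [hmAmtdef]
    simp only
    have := hCumMono e he (i : ℕ) ((i : ℕ) + 1) (Nat.le_succ _)
    linarith
  have hmcap : ∀ e ∈ G.edgeSet, ∀ i, mAmt e i ≤ cap e i := by
    intro e he i
    have hcN : capN e (i : ℕ) = cap e i := by
      rw [hcapNdef]
      simp only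
      rw [dif_pos i.isLt]
    rw [hmAmtdef]
    simp only
    rw [hCumdef]
    simp only [Finset.sum_range_succ, hcN]
    set s := ∑ j ∈ Finset.range (i : ℕ), capN e j
    have hc := hcap0 e he i
    rcases le_total (p e) s with h | h
    · rw [min_eq_left h, min_eq_left (by linarith)]
      linarith
    · rw [min_eq_right h]
      have := min_le_right (p e) (s + cap e i)
      linarith
  have hmsum : ∀ e ∈ G.edgeSet, ∑ i : Fin k, mAmt e i = p e := by
    intro e he
    have h1 : ∑ i : Fin k, mAmt e i
        = ∑ n ∈ Finset.range k, (Cum e (n + 1) - Cum e n) := by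
      rw [← Fin.sum_univ_eq_sum_range (fun n => Cum e (n + 1) - Cum e n) k]
    rw [h1, Finset.sum_range_sub (fun n => Cum e n)]
    have h2 : Cum e 0 = 0 := by
      rw [hCumdef]
      simp only [Finset.range_zero, Finset.sum_empty]
      exact min_eq_right (hp e he)
    have h3 : Cum e k = p e := by
      rw [hCumdef]
      simp only
      apply min_eq_left
      have h4 : ∑ j ∈ Finset.range k, capN e j = ∑ i : Fin k, cap e i := by
        rw [← Fin.sum_univ_eq_sum_range (fun n => capN e n) k]
        refine Finset.sum_congr rfl fun i _ => ?_
        rw [hcapNdef]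
        simp only
        rw [dif_pos i.isLt]
      rw [h4]
      have h5 := hproc e he
      rw [hcapdef]
      exact h5
    rw [h2, h3, sub_zero]
  -- choose maintenance sets
  have hT : ∀ (e : Sym2 V) (i : Fin k), ∃ T : Set ℝ,
      MeasurableSet T ∧ T ⊆ Set.Ico (tp i.castSucc) (tp i.succ) \ Avail e i ∧
      (e ∈ G.edgeSet → T ⊆ Set.Icc (r e) (d e)) ∧
      (e ∈ G.edgeSet → volume T = ENNReal.ofReal (mAmt e i)) := by
    intro e i
    by_cases he : e ∈ G.edgeSet
    · by_cases hwin : r e ≤ tp i.castSucc ∧ tp i.succ ≤ d e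
      · -- window case: use the exact-measure subset lemma
        have hdm : MeasurableSet (Set.Ico (tp i.castSucc) (tp i.succ) \ Avail e i) :=
          measurableSet_Ico.diff (hAmeas e i)
        have hdsub : Set.Ico (tp i.castSucc) (tp i.succ) \ Avail e i ⊆
            Set.Ico (tp i.castSucc) (tp i.succ) := Set.diff_subset
        have hAfin : volume (Avail e i) ≠ ⊤ := by
          refine ne_top_of_le_ne_top ?_ (measure_mono (hAsub e i))
          rw [Real.volume_Ico]
          exact ENNReal.ofReal_ne_top
        have hdvol : volume (Set.Ico (tp i.castSucc) (tp i.succ) \ Avail e i)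
            = volume (Set.Ico (tp i.castSucc) (tp i.succ)) - volume (Avail e i) :=
          measure_diff (hAsub e i) (hAmeas e i).nullMeasurableSet hAfin
        have hchain : ENNReal.ofReal (mAmt e i) ≤
            volume (Set.Ico (tp i.castSucc) (tp i.succ) \ Avail e i) := by
          rw [hdvol, Real.volume_Ico]
          have hyle := (hy01 i e he).1
          have h1 : mAmt e i ≤ (tp i.succ - tp i.castSucc)
              - (tp i.succ - tp i.castSucc) * y i e := by
            have h2 := hmcap e he i
            rw [hcapdef] at h2
            simp only [if_pos hwin] at h2
            nlinarith [hw0 i]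
          calc ENNReal.ofReal (mAmt e i)
              ≤ ENNReal.ofReal ((tp i.succ - tp i.castSucc)
                - (tp i.succ - tp i.castSucc) * y i e) := ENNReal.ofReal_le_ofReal h1
            _ = ENNReal.ofReal (tp i.succ - tp i.castSucc)
                - ENNReal.ofReal ((tp i.succ - tp i.castSucc) * y i e) :=
                  ENNReal.ofReal_sub _ (mul_nonneg (hw0 i) hyle)
            _ ≤ ENNReal.ofReal (tp i.succ - tp i.castSucc) - volume (Avail e i) :=
                  tsub_le_tsub (le_refl _) (hAvol i e he)
        obtain ⟨T, hTs, hTm, hTv⟩ := LpSched.exists_subset_volume_eq hdm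
          (hdsub) (hm0 e he i) hchain
        refine ⟨T, hTm, hTs, fun _ => ?_, fun _ => hTv⟩
        intro t ht
        have h6 := (hTs ht).1
        exact ⟨le_trans hwin.1 h6.1, le_trans h6.2.le hwin.2⟩
      · -- no window: the maintenance amount is zero
        refine ⟨∅, MeasurableSet.empty, Set.empty_subset _,
          fun _ => Set.empty_subset _, fun _ => ?_⟩
        have h1 := hmcap e he i
        rw [hcapdef] at h1
        simp only [if_neg hwin] at h1
        have h2 := hm0 e he i
        have h3 : mAmt e i = 0 := le_antisymm h1 h2
        rw [h3]
        simp
    · exact ⟨∅, MeasurableSet.empty, Set.empty_subset _,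
        fun h => absurd h he, fun h => absurd h he⟩
  choose T hTmeas hTsub hTIcc hTvol using hT
  refine ⟨fun e => ⋃ i : Fin k, T e i, ?_, ?_⟩
  · -- feasibility
    intro e he
    refine ⟨MeasurableSet.iUnion fun i => hTmeas e i, Set.iUnion_subset fun i => hTIcc e i he, ?_⟩
    have hdisj : Pairwise (Function.onFun Disjoint (T e)) := by
      intro i i' hne
      exact Set.disjoint_of_subset
        (fun t ht => (hTsub e i ht).1)
        (fun t ht => (hTsub e i' ht).1)
        (hIcoDisj i i' hne)
    rw [measure_iUnion hdisj (fun i => hTmeas e i), tsum_fintype]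
    have h1 : ∀ i ∈ Finset.univ, volume (T e i) = ENNReal.ofReal (mAmt e i) :=
      fun i _ => hTvol e i he
    rw [Finset.sum_congr rfl h1,
      ← ENNReal.ofReal_sum_of_nonneg (fun i _ => hm0 e he i), hmsum e he]
  · -- objective bound
    set U : Set ℝ := ⋃ i : Fin k, ⋃ j : Fin (m i), piece i j with hUdef
    have hUsub : U ⊆ {t ∈ Set.Icc 0 (tp (Fin.last k)) |
        (G.deleteEdges {e | t ∈ ⋃ i : Fin k, T e i}).Reachable sp sm} := by
      intro t ht
      rw [hUdef] at ht
      obtain ⟨_, ⟨i, rfl⟩, _, ⟨j, rfl⟩, htj⟩ := ht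
      have htIco : t ∈ Set.Ico (tp i.castSucc) (tp i.succ) := hpsub i j htj
      constructor
      · exact ⟨le_trans (hbounds i).1 htIco.1, le_trans htIco.2.le (hbounds i).2⟩
      · -- the path P i j survives
        have hkeep : ∀ ed ∈ (P i j).edges, ed ∉ {e | t ∈ ⋃ i' : Fin k, T e i'} := by
          intro ed hed
          simp only [Set.mem_setOf_eq, Set.mem_iUnion]
          rintro ⟨i', hti'⟩
          have h1 := hTsub ed i' hti'
          by_cases hii : i' = i
          · subst hii
            refine h1.2 ?_
            rw [hAdef]
            exact Set.mem_iUnion.2 ⟨j, Set.mem_iUnion.2 ⟨hed, htj⟩⟩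
          · exact Set.disjoint_left.1 (hIcoDisj i' i hii) h1.1 htIco
        exact ⟨(P i j).toDeleteEdges _ hkeep⟩
    refine le_trans ?_ (measure_mono hUsub)
    -- volume of U
    have hUivol : ∀ i : Fin k, volume (⋃ j : Fin (m i), piece i j)
        = ENNReal.ofReal ((tp i.succ - tp i.castSucc) * f i) := by
      intro i
      rw [measure_iUnion (hpdisj i) (fun j => hpmeas i j), tsum_fintype]
      have h1 : ∀ j ∈ Finset.univ, volume (piece i j)
          = ENNReal.ofReal ((tp i.succ - tp i.castSucc) * g i j) := fun j _ => hpvol i j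
      rw [Finset.sum_congr rfl h1,
        ← ENNReal.ofReal_sum_of_nonneg (fun j _ => mul_nonneg (hw0 i) (hg0 i j)),
        ← Finset.mul_sum, hgsum]
    have hUdisj : Pairwise (Function.onFun Disjoint (fun i : Fin k => ⋃ j : Fin (m i), piece i j)) := by
      intro i i' hne
      exact Set.disjoint_of_subset
        (Set.iUnion_subset fun j => hpsub i j)
        (Set.iUnion_subset fun j => hpsub i' j)
        (hIcoDisj i i' hne)
    have hUvol : volume U = ∑ i : Fin k, ENNReal.ofReal ((tp i.succ - tp i.castSucc) * f i) := by
      rw [hUdef, measure_iUnion hUdisj (fun i => MeasurableSet.iUnion fun j => hpmeas i j),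
        tsum_fintype]
      exact Finset.sum_congr rfl fun i _ => hUivol i
    rw [hUvol]
    rw [show LPObjective tp f = ∑ i : Fin k, (tp i.succ - tp i.castSucc) * f i from rfl]
    rw [ENNReal.ofReal_sum_of_nonneg (fun i _ => mul_nonneg (hw0 i) (hf01 i).1)]
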